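/- Let S be a densely defined closed operator in a complex Hilbert space H such that both S and its adjoint S* have kernels of dimension at most 2 at every point (i.e., dim ker(S - zI) ≤ 2 and dim ker(S* - w̄ I) ≤ 2 for all z). Then the essential spectrum σ_e(S) := {z : not (dim ker(S-zI) < ∞ and ran(S-zI) closed)} is contained in the closure of the numerical range Θ(S) = {⟨f, Sf⟩ : f ∈ dom(S), ‖f‖ = 1}. -/

import Mathlib

open LinearPMap

/-- For a densely defined closed operator `S` in a complex Hilbert space
with `dim ker(S - z) ≤ 2` and `dim ker(S* - z̄) ≤ 2` for all `z`, the essential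
spectrum of `S` is contained in the closure of the numerical range of `S`. -/
theorem essential_spectrum_subset_numerical_range
    {H : Type*} [NormedAddCommGroup H] [InnerProductSpace ℂ H] [CompleteSpace H]
    (S : H →ₗ.[ℂ] H)
    (hdense : Dense (S.domain : Set H))
    (hclosed : IsClosed (S.graph : Set (H × H)))
    (hker : ∀ z : ℂ,
      Module.rank ℂ (LinearMap.ker (S.toFun - z • S.domain.subtype)) ≤ 2)
    (hker' : ∀ z : ℂ,
      Module.rank ℂ (LinearMap.ker (S.adjoint.toFun
        - (starRingEnd ℂ z) • S.adjoint.domain.subtype)) ≤ 2) :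
    {z : ℂ | ¬ (FiniteDimensional ℂ
        (LinearMap.ker (S.toFun - z • S.domain.subtype)) ∧
      IsClosed ((LinearMap.range (S.toFun - z • S.domain.subtype) : Submodule ℂ H)
        : Set H))}
    ⊆ closure {c : ℂ | ∃ f : S.domain, ‖(f : H)‖ = 1 ∧
        (inner ℂ ((f : H)) (S f) : ℂ) = c} := by
  intro z hz
  by_contra hcl
  apply hz
  set T : S.domain →ₗ[ℂ] H := S.toFun - z • S.domain.subtype with hT
  have hTapp : ∀ f : S.domain, T f = S f - z • (f : H) := fun f => rfl
  refine ⟨?_, ?_⟩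
  · have hfree : Module.Free ℂ (LinearMap.ker T) := Module.Free.of_divisionRing ℂ _
    exact Module.rank_lt_aleph0_iff.mp
      (lt_of_le_of_lt (hker z) (by exact_mod_cast Cardinal.nat_lt_aleph0 2))
  -- extract the gap ε
  rw [Metric.mem_closure_iff] at hcl
  push_neg at hcl
  obtain ⟨ε, hε, hdist⟩ := hcl
  -- key lower bound
  have key : ∀ f : S.domain, ε * ‖(f : H)‖ ≤ ‖T f‖ := by
    intro f
    rcases eq_or_ne ((f : H)) 0 with h0 | h0
    · simp [h0, hε.le]
    have hn : (0:ℝ) < ‖(f:H)‖ := norm_pos_iff.mpr h0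
    set r : ℂ := ((‖(f:H)‖⁻¹ : ℝ) : ℂ) with hr
    set g : S.domain := r • f with hg
    have hgnorm : ‖(g : H)‖ = 1 := by
      have : (g : H) = r • (f : H) := rfl
      rw [this, norm_smul, hr]
      simp [norm_inv, inv_mul_cancel₀ hn.ne']
    set c : ℂ := (inner ℂ ((g : H)) (S g) : ℂ) with hc
    have hmem : c ∈ {c : ℂ | ∃ f : S.domain, ‖(f : H)‖ = 1 ∧
        (inner ℂ ((f : H)) (S f) : ℂ) = c} := ⟨g, hgnorm, rfl⟩
    have hεc : ε ≤ dist z c := hdist c hmem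
    -- compute c
    have hSg : S g = r • S f := by
      show S.toFun (r • f) = r • S.toFun f
      exact map_smul S.toFun r f
    have hcval : c = (r * r) * (inner ℂ ((f : H)) (S f) : ℂ) := by
      rw [hc]
      have : (g : H) = r • (f : H) := rfl
      rw [this, hSg, inner_smul_left, inner_smul_right, hr, Complex.conj_ofReal]
      ring
    -- inner f (T f)
    have hinner : (inner ℂ ((f : H)) (T f) : ℂ)
        = (inner ℂ ((f : H)) (S f) : ℂ) - z * ((‖(f:H)‖ : ℂ))^2 := by
      rw [hTapp, inner_sub_right, inner_smul_right, inner_self_eq_norm_sq_to_K]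
      norm_cast
    have hrinv : r ≠ 0 := by
      simp [hr, Complex.ofReal_eq_zero, hn.ne']
    have hr2 : (r * r) * ((‖(f:H)‖ : ℂ))^2 = 1 := by
      rw [hr]
      norm_cast
      field_simp
      exact mul_inv_cancel₀ hn.ne'
    have hz_c : z - c = -(r * r) * (inner ℂ ((f : H)) (T f) : ℂ) := by
      rw [hcval, hinner]
      linear_combination -z * hr2
    have habs : dist z c = ‖(f:H)‖⁻¹^2 * ‖(inner ℂ ((f : H)) (T f) : ℂ)‖ := by
      rw [dist_eq_norm, hz_c, norm_mul, norm_neg, norm_mul, hr, Complex.norm_real]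
      rw [Real.norm_eq_abs, abs_of_nonneg (inv_nonneg.mpr (norm_nonneg _))]
      ring
    have hCS : ‖(inner ℂ ((f : H)) (T f) : ℂ)‖ ≤ ‖(f:H)‖ * ‖T f‖ :=
      norm_inner_le_norm _ _
    have h1 : ε ≤ ‖(f:H)‖⁻¹^2 * (‖(f:H)‖ * ‖T f‖) := by
      calc ε ≤ dist z c := hεc
        _ = ‖(f:H)‖⁻¹^2 * ‖(inner ℂ ((f : H)) (T f) : ℂ)‖ := habs
        _ ≤ ‖(f:H)‖⁻¹^2 * (‖(f:H)‖ * ‖T f‖) := by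
            apply mul_le_mul_of_nonneg_left hCS (by positivity)
    have h2 : ‖(f:H)‖⁻¹^2 * (‖(f:H)‖ * ‖T f‖) = ‖(f:H)‖⁻¹ * ‖T f‖ := by
      field_simp
    rw [h2] at h1
    calc ε * ‖(f:H)‖ ≤ (‖(f:H)‖⁻¹ * ‖T f‖) * ‖(f:H)‖ :=
          mul_le_mul_of_nonneg_right h1 (norm_nonneg _)
      _ = ‖T f‖ := by field_simp
  -- closedness of the range
  apply IsSeqClosed.isClosed
  intro b y hb hby
  choose f hf using hb
  have hcau : CauchySeq (fun n => ((f n : H))) := by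
    have hcb : CauchySeq b := hby.cauchySeq
    rw [Metric.cauchySeq_iff] at hcb ⊢
    intro δ hδ
    obtain ⟨N, hN⟩ := hcb (ε * δ) (by positivity)
    refine ⟨N, fun m hm n hn => ?_⟩
    have := key (f m - f n)
    have hsub : ((f m - f n : S.domain) : H) = (f m : H) - (f n : H) := rfl
    have hTsub : T (f m - f n) = b m - b n := by
      rw [LinearMap.map_sub, hf, hf]
    rw [hsub, hTsub] at this
    have hd := hN m hm n hn
    rw [dist_eq_norm] at hd ⊢
    nlinarith [norm_nonneg ((f m : H) - (f n : H))]
  obtain ⟨x, hx⟩ := cauchySeq_tendsto_of_complete hcau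
  have hSf : Filter.Tendsto (fun n => S (f n)) Filter.atTop (nhds (y + z • x)) := by
    have heq : ∀ n, S (f n) = b n + z • ((f n : H)) := by
      intro n
      have := hf n
      rw [hTapp] at this
      rw [← this]; abel
    simp only [heq]
    exact hby.add (hx.const_smul z)
  have hgraph : (x, y + z • x) ∈ S.graph := by
    have hseq : IsSeqClosed (S.graph : Set (H × H)) := hclosed.isSeqClosed
    exact hseq (fun n => S.mem_graph (f n)) (hx.prodMk_nhds hSf)
  rw [mem_graph_iff] at hgraph
  obtain ⟨x', hx'1, hx'2⟩ := hgraph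
  refine ⟨x', ?_⟩
  have hTx : T x' = S x' - z • (x' : H) := hTapp x'
  rw [hTx, hx'2, hx'1]
  simp
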